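/- Let A, B be self-adjoint operators on H whose unitary groups satisfy the Weyl commutation relation e^{isA}e^{itB} = e^{±ist}e^{itB}e^{isA} for all s,t ∈ ℝ. If ρ is a state of B(H) whose restriction to the von Neumann algebra generated by A is dispersion-free (multiplicative), then ρ(e^{itB}) = 0 for all t ≠ 0. -/

import Mathlib

open scoped ComplexOrder


/-- A positive linear functional on a star algebra is Hermitian. -/
lemma state_herm {A : Type*} [Ring A] [StarRing A] [Algebra ℂ A] [StarModule ℂ A]
    (ρ : A →ₗ[ℂ] ℂ) (hpos : ∀ T : A, 0 ≤ ρ (star T * T)) :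
    ∀ T, ρ (star T) = (starRingEnd ℂ) (ρ T) := by
  intro T
  have him : ∀ S : A, (ρ (star S * S)).im = 0 := fun S => ((Complex.le_def.mp (hpos S)).2).symm
  have h3 : (ρ 1).im = 0 := by have := him 1; simpa using this
  have e1 : star (T + 1) * (T + 1) = star T * T + star T + T + 1 := by
    simp only [star_add, star_one]; noncomm_ring
  have e2 : star (T + Complex.I • 1) * (T + Complex.I • 1)
      = star T * T + Complex.I • star T + (- Complex.I) • T + 1 := by
    have hI : (-Complex.I) * Complex.I = 1 := by
      simp [Complex.I_mul_I]
    simp only [star_add, star_smul, star_one, Complex.star_def, Complex.conj_I, add_mul, mul_add,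
      smul_mul_assoc, mul_smul_comm, one_mul, mul_one, smul_smul, hI, one_smul]
    simp only [smul_add, smul_smul, neg_smul, one_smul, mul_neg, Complex.I_mul_I, neg_neg]
    match_scalars <;> simp [Complex.I_sq]
  have h1 := him (T + 1)
  have h2 := him (T + Complex.I • 1)
  rw [e1] at h1
  rw [e2] at h2
  simp only [map_add, map_smul, map_one, smul_eq_mul, Complex.add_im, Complex.mul_im,
    Complex.I_re, Complex.I_im, Complex.one_im, Complex.neg_im, Complex.neg_re,
    him T, h3] at h1 h2
  apply Complex.ext <;> simp only [Complex.conj_re, Complex.conj_im] <;> nlinarith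

/-- Degenerate Cauchy–Schwarz: if ρ(X*X) = 0 then ρ(Z*X) = 0 for all Z. -/
lemma state_cs0 {A : Type*} [Ring A] [StarRing A] [Algebra ℂ A] [StarModule ℂ A]
    (ρ : A →ₗ[ℂ] ℂ) (hpos : ∀ T : A, 0 ≤ ρ (star T * T))
    (X : A) (hX : ρ (star X * X) = 0) (Z : A) : ρ (star Z * X) = 0 := by
  have herm := state_herm ρ hpos
  set w : ℂ := ρ (star Z * X) with hw
  by_contra hne
  have hconj : ρ (star X * Z) = (starRingEnd ℂ) w := by
    have : star X * Z = star (star Z * X) := by simp [star_mul]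
    rw [this, herm]
  set K : ℂ := ρ (star Z * Z) with hK
  have hKpos := hpos Z
  have hKre : 0 ≤ K.re := (Complex.le_def.mp hKpos).1
  have hKim : K.im = 0 := ((Complex.le_def.mp hKpos).2).symm
  set t : ℝ := 1 / (K.re + 1) with ht
  set l : ℂ := (t : ℂ) * w with hl
  have expand : star (X - l • Z) * (X - l • Z)
      = star X * X - l • (star X * Z) - (starRingEnd ℂ l) • (star Z * X)
        + ((starRingEnd ℂ l) * l) • (star Z * Z) := by
    simp only [star_sub, star_smul, Complex.star_def, sub_mul, mul_sub, smul_mul_assoc,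
      mul_smul_comm, smul_smul]
    abel_nf
    module
  have hval := hpos (X - l • Z)
  rw [expand] at hval
  simp only [map_add, map_sub, map_smul, smul_eq_mul, hX, hconj, ← hw, ← hK] at hval
  have hlw : l * (starRingEnd ℂ) w = (t : ℝ) • (w * (starRingEnd ℂ) w) := by
    simp [hl]; ring
  have hnorm : w * (starRingEnd ℂ) w = (Complex.normSq w : ℂ) := by
    rw [Complex.mul_conj]
  have hre := (Complex.le_def.mp hval).1
  have hM : 0 < Complex.normSq w := by
    have := Complex.normSq_pos.mpr hne
    exact this
  -- compute real part
  have hval' : (0:ℝ) ≤ (0 - l * (starRingEnd ℂ) w - (starRingEnd ℂ) l * w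
      + (starRingEnd ℂ) l * l * K).re := hre
  have hcomp : (0 - l * (starRingEnd ℂ) w - (starRingEnd ℂ) l * w
      + (starRingEnd ℂ) l * l * K).re
      = -2 * t * Complex.normSq w + t^2 * Complex.normSq w * K.re := by
    simp only [hl, map_mul, Complex.conj_ofReal]
    have : ((t:ℂ) * w * ((starRingEnd ℂ) w)) = (t:ℂ) * (Complex.normSq w : ℂ) := by
      rw [mul_assoc, Complex.mul_conj]
    simp only [Complex.sub_re, Complex.add_re, Complex.zero_re, Complex.mul_re, Complex.mul_im,
      Complex.ofReal_re, Complex.ofReal_im, Complex.normSq_apply, Complex.conj_re,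
      Complex.conj_im, hKim]
    ring
  rw [hcomp] at hval'
  have htpos : 0 < t := by positivity
  have htK : t * K.re < 1 := by
    rw [ht]
    rw [div_mul_eq_mul_div, one_mul, div_lt_one (by linarith)]
    linarith
  nlinarith [mul_pos htpos hM]


/-- Let U_s = e^{isA} and W_t = e^{itB} be the unitary groups of self-adjoint operators
A, B satisfying the Weyl relation U_s W_t = e^{±ist} W_t U_s.  If ρ is a state of B(H)
that is dispersion-free (multiplicative) on the von Neumann algebra generated by A
(equivalently on the unitary group (U_s)), then ρ(W_t) = 0 for all t ≠ 0. -/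
theorem stmt_16 {H : Type*} [NormedAddCommGroup H] [InnerProductSpace ℂ H] [CompleteSpace H]
    (U W : ℝ → (H →L[ℂ] H))
    (hUu : ∀ s, U s ∈ unitary (H →L[ℂ] H)) (hWu : ∀ t, W t ∈ unitary (H →L[ℂ] H))
    (hU0 : U 0 = 1) (hUadd : ∀ s t, U (s + t) = U s * U t)
    (hUstar : ∀ s, star (U s) = U (-s))
    (ε : ℝ) (hε : ε = 1 ∨ ε = -1)
    (hWeyl : ∀ s t, U s * W t = Complex.exp (ε * s * t * Complex.I) • (W t * U s))
    (ρ : (H →L[ℂ] H) →ₗ[ℂ] ℂ)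
    (hpos : ∀ T : H →L[ℂ] H, 0 ≤ ρ (star T * T)) (hone : ρ 1 = 1)
    (hmult : ∀ s t, ρ (U s * U t) = ρ (U s) * ρ (U t)) :
    ∀ t : ℝ, t ≠ 0 → ρ (W t) = 0 := by
  have herm := state_herm ρ hpos
  have cs0 := state_cs0 ρ hpos
  -- ρ(U(-s)) is the conjugate of ρ(U s)
  have hconjU : ∀ s, ρ (U (-s)) = (starRingEnd ℂ) (ρ (U s)) := by
    intro s; rw [← hUstar, herm]
  -- |ρ(U s)|² = 1
  have hUinv : ∀ s, ρ (U s) * (starRingEnd ℂ) (ρ (U s)) = 1 := by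
    intro s
    rw [← hconjU, ← hmult]
    have : U s * U (-s) = 1 := by rw [← hUadd, add_neg_cancel, hU0]
    rw [this, hone]
  -- the key degenerate vector
  have hXX : ∀ s, ρ (star (U s - ρ (U s) • 1) * (U s - ρ (U s) • 1)) = 0 := by
    intro s
    set c : ℂ := ρ (U s) with hc
    have hstar : star (U s - c • 1) = U (-s) - (starRingEnd ℂ) c • 1 := by
      rw [star_sub, hUstar, star_smul, star_one, Complex.star_def]
    have hmm : U (-s) * U s = 1 := by rw [← hUadd, neg_add_cancel, hU0]
    have expand : star (U s - c • 1) * (U s - c • 1)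
        = 1 - c • U (-s) - (starRingEnd ℂ) c • U s + ((starRingEnd ℂ) c * c) • 1 := by
      rw [hstar]
      simp only [sub_mul, mul_sub, smul_mul_assoc, mul_smul_comm, smul_smul, one_mul, mul_one,
        hmm]
      abel_nf
      module
    rw [expand]
    simp only [map_add, map_sub, map_smul, smul_eq_mul, hone, hconjU, ← hc, mul_one]
    have h := hUinv s
    rw [← hc] at h
    linear_combination -h
  -- right multiplicativity
  have hrmul : ∀ s Y, ρ (Y * U s) = ρ (U s) * ρ Y := by
    intro s Y
    have h := cs0 _ (hXX s) (star Y)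
    rw [star_star] at h
    rw [mul_sub, mul_smul_comm, mul_one, map_sub, map_smul, smul_eq_mul, sub_eq_zero] at h
    rw [h]
  -- left multiplicativity
  have hlmul : ∀ s Z, ρ (U s * Z) = ρ (U s) * ρ Z := by
    intro s Z
    have h1 : ρ (U s * Z) = (starRingEnd ℂ) (ρ (star (U s * Z))) := by
      rw [herm, Complex.conj_conj]
    rw [h1, star_mul, hUstar, hrmul, map_mul, hconjU, Complex.conj_conj, ← herm, star_star]
  -- finish
  intro t ht
  have hεne : ε ≠ 0 := by rcases hε with h | h <;> rw [h] <;> norm_num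
  set s : ℝ := Real.pi / (ε * t) with hs
  have harg : (ε : ℂ) * s * t = (Real.pi : ℂ) := by
    have : ε * s * t = Real.pi := by
      rw [hs]; field_simp
    calc (ε : ℂ) * s * t = ((ε * s * t : ℝ) : ℂ) := by push_cast; ring
    _ = (Real.pi : ℂ) := by rw [this]
  have hexp : Complex.exp (ε * s * t * Complex.I) = -1 := by
    rw [harg, Complex.exp_pi_mul_I]
  have hW := hWeyl s t
  rw [hexp] at hW
  have := congrArg ρ hW
  rw [hlmul, map_smul, hrmul, smul_eq_mul] at this
  have h2 : 2 * (ρ (U s) * ρ (W t)) = 0 := by linear_combination this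
  have hUne : ρ (U s) ≠ 0 := by
    intro h
    have := hUinv s
    rw [h] at this
    simp at this
  have h3 : ρ (U s) * ρ (W t) = 0 := by linear_combination h2 / 2
  rcases mul_eq_zero.mp h3 with h | h
  · exact absurd h hUne
  · exact h
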